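/- Let E be a finite-dimensional real inner product space, let J : E → E be a self-adjoint positive-definite linear operator, and let α > 0 and β > 0. Define F : E → E by F(σ) = (1 + β^α·‖J σ‖^α)^(−1/α) • J(J σ). Then F satisfies the Lipschitz-type continuity estimate ⟨F(σ₁) − F(σ₂), σ₁ − σ₂⟩ ≤ ‖J‖² · ‖σ₁ − σ₂‖² for all σ₁, σ₂ ∈ E, where ‖J‖ denotes the operator norm of J. -/
import Mathlib


open Real Filter Topology Set
open scoped RealInnerProductSpace

/-- With `J` a self-adjoint positive-definite operator, the strain-limiting
response `F(σ) = (1 + β^α ‖Jσ‖^α)^(-1/α) • J(Jσ)` satisfies the Lipschitz-type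
estimate `⟪F σ₁ - F σ₂, σ₁ - σ₂⟫ ≤ ‖J‖² ‖σ₁ - σ₂‖²`. -/
theorem strainLimiting_compliance_lipschitz_estimate
    {E : Type*} [NormedAddCommGroup E] [InnerProductSpace ℝ E]
    [FiniteDimensional ℝ E]
    (J : E →L[ℝ] E) (hsym : ∀ x y : E, ⟪J x, y⟫ = ⟪x, J y⟫)
    (hpos : ∀ x : E, x ≠ 0 → 0 < ⟪J x, x⟫)
    (α β : ℝ) (hα : 0 < α) (hβ : 0 < β) (σ₁ σ₂ : E) :
    ⟪(1 + β ^ α * ‖J σ₁‖ ^ α) ^ (-1 / α) • J (J σ₁) -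
        (1 + β ^ α * ‖J σ₂‖ ^ α) ^ (-1 / α) • J (J σ₂), σ₁ - σ₂⟫ ≤
      ‖J‖ ^ 2 * ‖σ₁ - σ₂‖ ^ 2 := by
  set a := J σ₁ with ha
  set b := J σ₂ with hb
  set c₁ := (1 + β ^ α * ‖a‖ ^ α) ^ (-1 / α) with hc₁
  set c₂ := (1 + β ^ α * ‖b‖ ^ α) ^ (-1 / α) with hc₂
  have hexp : -1 / α ≤ 0 := div_nonpos_of_nonpos_of_nonneg (by norm_num) hα.le
  have hbase : ∀ x : E, (1:ℝ) ≤ 1 + β ^ α * ‖x‖ ^ α := by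
    intro x
    have h1 : (0:ℝ) ≤ β ^ α := (Real.rpow_pos_of_pos hβ α).le
    have h2 : (0:ℝ) ≤ ‖x‖ ^ α := Real.rpow_nonneg (norm_nonneg x) α
    nlinarith
  have hbasepos : ∀ x : E, (0:ℝ) < 1 + β ^ α * ‖x‖ ^ α := fun x =>
    lt_of_lt_of_le one_pos (hbase x)
  have hc₁pos : 0 < c₁ := Real.rpow_pos_of_pos (hbasepos a) _
  have hc₂pos : 0 < c₂ := Real.rpow_pos_of_pos (hbasepos b) _
  have hc₁le : c₁ ≤ 1 := Real.rpow_le_one_of_one_le_of_nonpos (hbase _) hexp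
  have hc₂le : c₂ ≤ 1 := Real.rpow_le_one_of_one_le_of_nonpos (hbase _) hexp
  -- monotonicity fact
  have mono : ∀ x y : E, ‖y‖ ≤ ‖x‖ →
      (1 + β ^ α * ‖x‖ ^ α) ^ (-1 / α) ≤ (1 + β ^ α * ‖y‖ ^ α) ^ (-1 / α) := by
    intro x y hxy
    refine Real.rpow_le_rpow_of_nonpos (hbasepos y) ?_ hexp
    have := Real.rpow_le_rpow (norm_nonneg y) hxy hα.le
    nlinarith [ (Real.rpow_pos_of_pos hβ α).le ]
  have h1 : 0 ≤ ((1 - c₁) * ‖a‖ - (1 - c₂) * ‖b‖) * (‖a‖ - ‖b‖) := by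
    rcases le_total ‖b‖ ‖a‖ with h | h
    · have hc : c₁ ≤ c₂ := mono _ _ h
      have : (1 - c₂) * ‖b‖ ≤ (1 - c₁) * ‖a‖ :=
        mul_le_mul (by linarith) h (norm_nonneg _) (by linarith)
      have := sub_nonneg.mpr this
      exact mul_nonneg this (by linarith)
    · have hc : c₂ ≤ c₁ := mono _ _ h
      have : (1 - c₁) * ‖a‖ ≤ (1 - c₂) * ‖b‖ :=
        mul_le_mul (by linarith) h (norm_nonneg _) (by linarith)
      nlinarith
  have key : ⟪c₁ • J a - c₂ • J b, σ₁ - σ₂⟫ = ⟪c₁ • a - c₂ • b, a - b⟫ := by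
    have h := hsym (c₁ • a - c₂ • b) (σ₁ - σ₂)
    rw [map_sub, map_smul, map_smul] at h
    rw [h, map_sub, ← ha, ← hb]
  have step1 : ⟪c₁ • a - c₂ • b, a - b⟫ ≤ ‖a - b‖ ^ 2 := by
    have hcs : ⟪a, b⟫ ≤ ‖a‖ * ‖b‖ := real_inner_le_norm a b
    have hexpand : ⟪c₁ • a - c₂ • b, a - b⟫ =
        c₁ * ‖a‖ ^ 2 - (c₁ + c₂) * ⟪a, b⟫ + c₂ * ‖b‖ ^ 2 := by
      simp [inner_sub_left, inner_sub_right, real_inner_smul_left,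
        real_inner_self_eq_norm_sq, real_inner_comm b a]
      ring
    have hnorm : ‖a - b‖ ^ 2 = ‖a‖ ^ 2 - 2 * ⟪a, b⟫ + ‖b‖ ^ 2 := by
      rw [@norm_sub_sq_real]
    rw [hexpand, hnorm]
    nlinarith [h1]
  have step2 : ‖a - b‖ ^ 2 ≤ ‖J‖ ^ 2 * ‖σ₁ - σ₂‖ ^ 2 := by
    have : ‖a - b‖ ≤ ‖J‖ * ‖σ₁ - σ₂‖ := by
      rw [ha, hb, ← map_sub]; exact J.le_opNorm _
    calc ‖a - b‖ ^ 2 ≤ (‖J‖ * ‖σ₁ - σ₂‖) ^ 2 :=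
          pow_le_pow_left₀ (norm_nonneg _) this 2
      _ = ‖J‖ ^ 2 * ‖σ₁ - σ₂‖ ^ 2 := by ring
  calc ⟪c₁ • J a - c₂ • J b, σ₁ - σ₂⟫ = ⟪c₁ • a - c₂ • b, a - b⟫ := key
    _ ≤ ‖a - b‖ ^ 2 := step1
    _ ≤ ‖J‖ ^ 2 * ‖σ₁ - σ₂‖ ^ 2 := step2
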